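/- Let n be a natural number and R₀ > 0. Let h : ℝ × ℝⁿ → ℝ be C², and α : ℝ × ℝⁿ → ℝⁿ be C¹. Define Φ : ℝ × ℝⁿ → ℝ × ℝ × ℝⁿ × ℝⁿ by Φ(r, q) = (r, h(r,q), q, α(r,q)). For a point x = (r, z, q, p) define the alternating bilinear form Ω_x on ℝ × ℝ × ℝⁿ × ℝⁿ by Ω_x((a₁,b₁,v₁,w₁),(a₂,b₂,v₂,w₂)) = a₁·(⟨p, v₂⟩ − b₂) − a₂·(⟨p, v₁⟩ − b₁) + r·(⟨w₁, v₂⟩ − ⟨w₂, v₁⟩), where ⟨·,·⟩ is the Euclidean dot product (Ω is the 2-form d(r(p·dq − dz)) in coordinates). Write ∇_q h(a, q) ∈ ℝⁿ for the gradient of the function q ↦ h(a, q). Then the following are equivalent: (a) for every r ≥ R₀, every q ∈ ℝⁿ, and all ξ, η ∈ ℝ × ℝⁿ, Ω_{Φ(r,q)}(DΦ(r,q)(ξ), DΦ(r,q)(η)) = 0 (the image of Φ over {r ≥ R₀} is Lagrangian); (b) there exists a C¹ map β : ℝⁿ → ℝⁿ whose derivative is symmetric at every point (⟨Dβ(q)v,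 w⟩ = ⟨Dβ(q)w, v⟩ for all q, v, w, i.e. β is a closed 1-form) such that for all r ≥ R₀ and all q ∈ ℝⁿ, r·α(r, q) = ∫_{R₀}^r ∇_q h(a, q) da + β(q). -/

import Mathlib

open scoped RealInnerProductSpace

/-- The coordinate 2-form `Ω = d(r(p·dq - dz))` on `ℝ × ℝ × ℝⁿ × ℝⁿ` (coordinates
`(r, z, q, p)`), evaluated at the point `x` on the pair of tangent vectors
`V₁ = (a₁, b₁, v₁, w₁)` and `V₂ = (a₂, b₂, v₂, w₂)`. -/
noncomputable def coneForm {n : ℕ}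
    (x V₁ V₂ : ℝ × ℝ × EuclideanSpace ℝ (Fin n) × EuclideanSpace ℝ (Fin n)) : ℝ :=
  V₁.1 * ((inner ℝ x.2.2.2 V₂.2.2.1 : ℝ) - V₂.2.1)
    - V₂.1 * ((inner ℝ x.2.2.2 V₁.2.2.1 : ℝ) - V₁.2.1)
    + x.1 * ((inner ℝ V₁.2.2.2 V₂.2.2.1 : ℝ) - (inner ℝ V₂.2.2.2 V₁.2.2.1 : ℝ))

/-- The parametrization `Φ(r,q) = (r, h(r,q), q, α(r,q))` of the asymptotically conic
Lagrangian end written in Darboux normal form. -/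
noncomputable def coneParam {n : ℕ}
    (h : ℝ × EuclideanSpace ℝ (Fin n) → ℝ)
    (α : ℝ × EuclideanSpace ℝ (Fin n) → EuclideanSpace ℝ (Fin n))
    (p : ℝ × EuclideanSpace ℝ (Fin n)) :
    ℝ × ℝ × EuclideanSpace ℝ (Fin n) × EuclideanSpace ℝ (Fin n) :=
  (p.1, h p, p.2, α p)

open ContinuousLinearMap

variable {n : ℕ}
local notation "E" => EuclideanSpace ℝ (Fin n)

section aux
variable {F : Type*} [NormedAddCommGroup F] [NormedSpace ℝ F]

lemma hasFDerivAt_fixfst {f : ℝ × E → F} {a : ℝ} {q : E}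
    (hf : DifferentiableAt ℝ f (a, q)) :
    HasFDerivAt (fun x => f (a, x)) ((fderiv ℝ f (a, q)).comp (inr ℝ ℝ E)) q :=
  hf.hasFDerivAt.comp q (hasFDerivAt_prodMk_right a q)

lemma hasDerivAt_fixsnd {f : ℝ × E → F} {a : ℝ} {q : E}
    (hf : DifferentiableAt ℝ f (a, q)) :
    HasDerivAt (fun t => f (t, q)) (fderiv ℝ f (a, q) (1, 0)) a := by
  have h1 : HasDerivAt (fun t : ℝ => (t, q)) ((1 : ℝ), (0 : E)) a := by
    simpa using ((hasDerivAt_id a).prodMk (hasDerivAt_const a q))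
  exact (hf.hasFDerivAt.comp_hasDerivAt a h1)
end aux

noncomputable def qgrad (n : ℕ) (h : ℝ × EuclideanSpace ℝ (Fin n) → ℝ)
    (p : ℝ × EuclideanSpace ℝ (Fin n)) : EuclideanSpace ℝ (Fin n) :=
  (InnerProductSpace.toDual ℝ (EuclideanSpace ℝ (Fin n))).symm
    ((fderiv ℝ h p).comp (inr ℝ ℝ (EuclideanSpace ℝ (Fin n))))

lemma inner_qgrad (h : ℝ × E → ℝ) (p : ℝ × E) (v : E) :
    ⟪qgrad n h p, v⟫ = (fderiv ℝ h p).comp (inr ℝ ℝ E) v := by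
  simp [qgrad, InnerProductSpace.toDual_symm_apply]

lemma gradient_eq_qgrad {h : ℝ × E → ℝ} (hh : ContDiff ℝ 2 h) (a : ℝ) (q : E) :
    gradient (fun q' => h (a, q')) q = qgrad n h (a, q) := by
  have hd : DifferentiableAt ℝ h (a, q) :=
    (hh.differentiable (by norm_num)).differentiableAt
  exact (hasFDerivAt_iff_hasGradientAt.mp (hasFDerivAt_fixfst hd)).gradient

lemma contDiff_qgrad {h : ℝ × E → ℝ} (hh : ContDiff ℝ 2 h) :
    ContDiff ℝ 1 (qgrad n h) := by
  have h1 : ContDiff ℝ 1 (fderiv ℝ h) := hh.fderiv_right (le_refl 2)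
  have h2 : ContDiff ℝ 1 (fun p => (fderiv ℝ h p).comp (inr ℝ ℝ E)) :=
    (((compL ℝ E (ℝ × E) ℝ).flip (inr ℝ ℝ E)).contDiff).comp h1
  exact ((InnerProductSpace.toDual ℝ E).symm.contDiff).comp h2
-- continuing

lemma fderiv_coneParam {h : ℝ × E → ℝ} (hh : ContDiff ℝ 2 h)
    {α : ℝ × E → E} (hα : ContDiff ℝ 1 α) (p : ℝ × E) (ξ : ℝ × E) :
    fderiv ℝ (coneParam h α) p ξ = (ξ.1, fderiv ℝ h p ξ, ξ.2, fderiv ℝ α p ξ) := by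
  have hd : HasFDerivAt (coneParam h α)
      ((fst ℝ ℝ E).prod ((fderiv ℝ h p).prod ((snd ℝ ℝ E).prod (fderiv ℝ α p)))) p := by
    exact (hasFDerivAt_fst).prodMk
      (((hh.differentiable (by norm_num)).differentiableAt.hasFDerivAt).prodMk
        ((hasFDerivAt_snd).prodMk ((hα.differentiable one_ne_zero).differentiableAt.hasFDerivAt)))
  rw [hd.fderiv]; rfl

lemma clm_split {F : Type*} [NormedAddCommGroup F] [NormedSpace ℝ F]
    (L : (ℝ × E) →L[ℝ] F) (ξ : ℝ × E) : L ξ = ξ.1 • L (1, 0) + L (0, ξ.2) := by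
  have : ξ = ξ.1 • ((1 : ℝ), (0 : E)) + ((0 : ℝ), ξ.2) := by
    ext <;> simp
  rw [this, map_add, map_smul]
  simp

lemma key_iff {h : ℝ × E → ℝ} (hh : ContDiff ℝ 2 h)
    {α : ℝ × E → E} (hα : ContDiff ℝ 1 α) {r : ℝ} (hr : 0 < r) (q : E) :
    (∀ ξ η : ℝ × E,
        coneForm (coneParam h α (r, q))
          (fderiv ℝ (coneParam h α) (r, q) ξ)
          (fderiv ℝ (coneParam h α) (r, q) η) = 0)
      ↔ ((α (r, q) + r • (fderiv ℝ α (r, q) (1, 0)) = qgrad n h (r, q)) ∧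
          ∀ v w : E, ⟪fderiv ℝ α (r, q) (0, v), w⟫ = ⟪fderiv ℝ α (r, q) (0, w), v⟫) := by
  simp only [fderiv_coneParam hh hα, coneForm, coneParam]
  constructor
  · intro H
    constructor
    · apply ext_inner_right ℝ
      intro v
      have := H (1, 0) (0, v)
      simp only [inner_zero_right] at this
      have hq := inner_qgrad h (r, q) v
      simp only [ContinuousLinearMap.comp_apply, ContinuousLinearMap.inr_apply] at hq
      rw [inner_add_left, real_inner_smul_left, hq]
      linarith
    · intro v w
      have := H (0, v) (0, w)
      simp only [inner_zero_right] at this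
      have hr' : r ≠ 0 := hr.ne'
      have := mul_eq_zero.mp (by linarith : r * (⟪fderiv ℝ α (r, q) (0, v), w⟫
        - ⟪fderiv ℝ α (r, q) (0, w), v⟫) = 0)
      rcases this with h1 | h1
      · exact absurd h1 hr'
      · linarith
  · rintro ⟨hi, hii⟩ ξ η
    have hDh : ∀ v : E, fderiv ℝ h (r, q) (0, v)
        = ⟪α (r, q), v⟫ + r * ⟪fderiv ℝ α (r, q) (1, 0), v⟫ := by
      intro v
      have := congrArg (fun x : E => (⟪x, v⟫ : ℝ)) hi
      simp only [inner_add_left, real_inner_smul_left] at this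
      rw [inner_qgrad] at this
      simpa using this.symm
    rw [clm_split (fderiv ℝ α (r, q)) ξ, clm_split (fderiv ℝ α (r, q)) η,
      clm_split (fderiv ℝ h (r, q)) ξ, clm_split (fderiv ℝ h (r, q)) η,
      hDh ξ.2, hDh η.2]
    simp only [inner_add_left, real_inner_smul_left, smul_eq_mul]
    rw [hii ξ.2 η.2]
    ring

lemma qgrad_symm {h : ℝ × E → ℝ} (hh : ContDiff ℝ 2 h) (a : ℝ) (q : E) (v w : E) :
    ⟪(fderiv ℝ (qgrad n h) (a, q)).comp (inr ℝ ℝ E) v, w⟫ =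
      ⟪(fderiv ℝ (qgrad n h) (a, q)).comp (inr ℝ ℝ E) w, v⟫ := by
  set D := (fderiv ℝ (qgrad n h) (a, q)).comp (inr ℝ ℝ E) with hDdef
  set M := ((InnerProductSpace.toDual ℝ E).toContinuousLinearEquiv :
      E ≃L[ℝ] (StrongDual ℝ E)).toContinuousLinearMap with hMdef
  have hf : ∀ y : E, HasFDerivAt (fun x => h (a, x))
      (InnerProductSpace.toDual ℝ E (qgrad n h (a, y))) y := by
    intro y
    have he : (InnerProductSpace.toDual ℝ E) (qgrad n h (a, y))
        = (fderiv ℝ h (a, y)).comp (inr ℝ ℝ E) := by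
      simp [qgrad]
    rw [he]
    exact hasFDerivAt_fixfst ((hh.differentiable (by norm_num)).differentiableAt)
  have hD : HasFDerivAt (fun y => qgrad n h (a, y)) D q :=
    hasFDerivAt_fixfst (((contDiff_qgrad hh).differentiable one_ne_zero).differentiableAt)
  have htd : HasFDerivAt (fun y => InnerProductSpace.toDual ℝ E (qgrad n h (a, y)))
      (M.comp D) q := (M.hasFDerivAt.comp q hD :)
  have := second_derivative_symmetric hf htd v w
  simpa [hMdef, InnerProductSpace.toDual_apply_apply] using this

lemma hasFDerivAt_intGrad {h : ℝ × E → ℝ} (hh : ContDiff ℝ 2 h) (R₀ r : ℝ) (q : E) :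
    HasFDerivAt (fun x : E => ∫ a in R₀..r, qgrad n h (a, x))
      (∫ a in R₀..r, (fderiv ℝ (qgrad n h) (a, q)).comp (inr ℝ ℝ E)) q := by
  have hg : ContDiff ℝ 1 (qgrad n h) := contDiff_qgrad hh
  have hgc : Continuous (qgrad n h) := hg.continuous
  have hfd : Continuous (fun p : ℝ × E => (fderiv ℝ (qgrad n h) p).comp (inr ℝ ℝ E)) :=
    ((compL ℝ E (ℝ × E) E).flip (inr ℝ ℝ E)).continuous.comp (hg.continuous_fderiv one_ne_zero)
  set K := (Set.uIcc R₀ r) ×ˢ Metric.closedBall q 1 with hKdef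
  have hK : IsCompact K := isCompact_uIcc.prod (isCompact_closedBall q 1)
  obtain ⟨C, hC⟩ := hK.exists_bound_of_continuousOn hfd.continuousOn
  refine intervalIntegral.hasFDerivAt_integral_of_dominated_of_fderiv_le
    (F := fun x t => qgrad n h (t, x))
    (F' := fun x t => (fderiv ℝ (qgrad n h) (t, x)).comp (inr ℝ ℝ E))
    (bound := fun _ => C) (Metric.ball_mem_nhds q one_pos) ?_ ?_ ?_ ?_ ?_ ?_
  · exact Filter.Eventually.of_forall fun x =>
      (hgc.comp (continuous_id.prodMk continuous_const)).aestronglyMeasurable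
  · exact (hgc.comp (continuous_id.prodMk continuous_const)).intervalIntegrable R₀ r
  · exact (hfd.comp (continuous_id.prodMk continuous_const)).aestronglyMeasurable
  · refine Filter.Eventually.of_forall fun t ht x hx => ?_
    refine hC (t, x) ?_
    exact Set.mk_mem_prod (Set.uIoc_subset_uIcc ht) (Metric.ball_subset_closedBall hx)
  · exact intervalIntegrable_const
  · refine Filter.Eventually.of_forall fun t ht x hx => ?_
    exact hasFDerivAt_fixfst ((hg.differentiable one_ne_zero).differentiableAt)

lemma hasDerivAt_rsmul {α : ℝ × E → E} (hα : ContDiff ℝ 1 α) (a : ℝ) (q : E) :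
    HasDerivAt (fun t => t • α (t, q)) (α (a, q) + a • fderiv ℝ α (a, q) (1, 0)) a := by
  have h1 : HasDerivAt (fun t : ℝ => α (t, q)) (fderiv ℝ α (a, q) (1, 0)) a :=
    hasDerivAt_fixsnd ((hα.differentiable one_ne_zero).differentiableAt)
  have := (hasDerivAt_id' (x := a)).smul h1
  simp [add_comm] at this
  exact this

theorem lagrangian_iff_integral_formula' (R₀ : ℝ) (hR₀ : 0 < R₀)
    (h : ℝ × E → ℝ) (hh : ContDiff ℝ 2 h)
    (α : ℝ × E → E) (hα : ContDiff ℝ 1 α) :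
    (∀ r : ℝ, R₀ ≤ r → ∀ q : E,
        ∀ ξ η : ℝ × E,
          coneForm (coneParam h α (r, q))
            (fderiv ℝ (coneParam h α) (r, q) ξ)
            (fderiv ℝ (coneParam h α) (r, q) η) = 0)
      ↔ (∃ β : E → E,
          ContDiff ℝ 1 β ∧
          (∀ q v w : E,
            (inner ℝ (fderiv ℝ β q v) w : ℝ) = (inner ℝ (fderiv ℝ β q w) v : ℝ)) ∧
          (∀ r : ℝ, R₀ ≤ r → ∀ q : E,
            r • α (r, q) =
              (∫ a in R₀..r, gradient (fun q' => h (a, q')) q) + β q)) := by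
  have hgc : Continuous (qgrad n h) := (contDiff_qgrad hh).continuous
  have hqc : ∀ q : E, Continuous (fun a : ℝ => qgrad n h (a, q)) := fun q =>
    hgc.comp (continuous_id.prodMk continuous_const)
  constructor
  · intro H
    refine ⟨fun q => R₀ • α (R₀, q), ?_, ?_, ?_⟩
    · exact (hα.comp (contDiff_const.prodMk contDiff_id)).const_smul R₀
    · intro q v w
      have hb : HasFDerivAt (fun q : E => R₀ • α (R₀, q))
          (R₀ • ((fderiv ℝ α (R₀, q)).comp (inr ℝ ℝ E))) q :=
        (hasFDerivAt_fixfst ((hα.differentiable one_ne_zero).differentiableAt)).const_smul R₀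
      rw [hb.fderiv]
      have hsym := ((key_iff hh hα hR₀ q).mp (H R₀ le_rfl q)).2
      simp only [ContinuousLinearMap.coe_smul', Pi.smul_apply,
        ContinuousLinearMap.comp_apply, ContinuousLinearMap.inr_apply,
        real_inner_smul_left]
      rw [hsym v w]
    · intro r hr q
      have key : ∀ a, R₀ ≤ a →
          α (a, q) + a • fderiv ℝ α (a, q) (1, 0) = qgrad n h (a, q) :=
        fun a ha => ((key_iff hh hα (lt_of_lt_of_le hR₀ ha) q).mp (H a ha q)).1
      have hint : IntervalIntegrable (fun a => qgrad n h (a, q))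
          MeasureTheory.volume R₀ r := (hqc q).intervalIntegrable R₀ r
      have hderiv : ∀ a ∈ Set.uIcc R₀ r,
          HasDerivAt (fun t => t • α (t, q)) (qgrad n h (a, q)) a := by
        intro a ha
        rw [Set.uIcc_of_le hr] at ha
        rw [← key a ha.1]
        exact hasDerivAt_rsmul hα a q
      have hFTC := intervalIntegral.integral_eq_sub_of_hasDerivAt hderiv hint
      have hgr : (∫ a in R₀..r, gradient (fun q' => h (a, q')) q)
          = ∫ a in R₀..r, qgrad n h (a, q) :=
        intervalIntegral.integral_congr fun a _ => gradient_eq_qgrad hh a q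
      rw [hgr, hFTC]
      abel
  · rintro ⟨β, hβ, hβsym, hfor⟩ r hr q
    have hrpos : 0 < r := lt_of_lt_of_le hR₀ hr
    rw [key_iff hh hα hrpos q]
    have hfor' : ∀ r', R₀ ≤ r' → ∀ x : E,
        r' • α (r', x) = (∫ a in R₀..r', qgrad n h (a, x)) + β x := by
      intro r' hr' x
      rw [← intervalIntegral.integral_congr fun a _ => gradient_eq_qgrad hh a x]
      exact hfor r' hr' x
    constructor
    · have h1 : HasDerivWithinAt (fun t => t • α (t, q))
          (α (r, q) + r • fderiv ℝ α (r, q) (1, 0)) (Set.Ici R₀) r :=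
        (hasDerivAt_rsmul hα r q).hasDerivWithinAt
      have h2full : HasDerivAt
          (fun t => (∫ a in R₀..t, qgrad n h (a, q)) + β q) (qgrad n h (r, q)) r := by
        have := intervalIntegral.integral_hasDerivAt_right
          ((hqc q).intervalIntegrable R₀ r)
          ((hqc q).aestronglyMeasurable.stronglyMeasurableAtFilter)
          ((hqc q).continuousAt)
        exact this.add_const (β q)
      have h2 : HasDerivWithinAt
          (fun t => (∫ a in R₀..t, qgrad n h (a, q)) + β q)
          (qgrad n h (r, q)) (Set.Ici R₀) r := h2full.hasDerivWithinAt
      have h1' : HasDerivWithinAt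
          (fun t => (∫ a in R₀..t, qgrad n h (a, q)) + β q)
          (α (r, q) + r • fderiv ℝ α (r, q) (1, 0)) (Set.Ici R₀) r :=
        h1.congr (fun y hy => (hfor' y hy q).symm) ((hfor' r hr q).symm)
      have hu : UniqueDiffWithinAt ℝ (Set.Ici R₀) r := uniqueDiffOn_Ici R₀ r hr
      exact (h1'.derivWithin hu).symm.trans (h2.derivWithin hu)
    · intro v w
      have hG := hasFDerivAt_intGrad hh R₀ r q
      have hβd : HasFDerivAt β (fderiv ℝ β q) q :=
        ((hβ.differentiable one_ne_zero).differentiableAt).hasFDerivAt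
      have hL : HasFDerivAt (fun x : E => r • α (r, x))
          (r • ((fderiv ℝ α (r, q)).comp (inr ℝ ℝ E))) q :=
        (hasFDerivAt_fixfst ((hα.differentiable one_ne_zero).differentiableAt)).const_smul r
      have hR : HasFDerivAt
          (fun x : E => (∫ a in R₀..r, qgrad n h (a, x)) + β x)
          ((∫ a in R₀..r, (fderiv ℝ (qgrad n h) (a, q)).comp (inr ℝ ℝ E))
            + fderiv ℝ β q) q := hG.add hβd
      have hfun : (fun x : E => r • α (r, x))
          = fun x : E => (∫ a in R₀..r, qgrad n h (a, x)) + β x :=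
        funext fun x => hfor' r hr x
      rw [hfun] at hL
      have hEq := hL.unique hR
      have hintCLM : IntervalIntegrable
          (fun a => (fderiv ℝ (qgrad n h) (a, q)).comp (inr ℝ ℝ E))
          MeasureTheory.volume R₀ r := by
        refine Continuous.intervalIntegrable ?_ R₀ r
        exact (((compL ℝ E (ℝ × E) E).flip (inr ℝ ℝ E)).continuous.comp
          (((contDiff_qgrad hh).continuous_fderiv one_ne_zero))).comp
          (continuous_id.prodMk continuous_const)
      have happ : ∀ u : E, r • (fderiv ℝ α (r, q) (0, u))
          = (∫ a in R₀..r, (fderiv ℝ (qgrad n h) (a, q)).comp (inr ℝ ℝ E) u)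
            + fderiv ℝ β q u := by
        intro u
        have := congrArg (fun L : E →L[ℝ] E => L u) hEq
        simpa [ContinuousLinearMap.intervalIntegral_apply hintCLM u] using this
      have hinner : ∀ u z : E,
          (∫ a in R₀..r, ⟪(fderiv ℝ (qgrad n h) (a, q)).comp (inr ℝ ℝ E) u, z⟫)
            = ⟪(∫ a in R₀..r, (fderiv ℝ (qgrad n h) (a, q)).comp (inr ℝ ℝ E) u), z⟫ := by
        intro u z
        have hi : IntervalIntegrable
            (fun a => (fderiv ℝ (qgrad n h) (a, q)).comp (inr ℝ ℝ E) u)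
            MeasureTheory.volume R₀ r := by
          refine Continuous.intervalIntegrable ?_ R₀ r
          exact (ContinuousLinearMap.apply ℝ E u).continuous.comp
            ((((compL ℝ E (ℝ × E) E).flip (inr ℝ ℝ E)).continuous.comp
              (((contDiff_qgrad hh).continuous_fderiv one_ne_zero))).comp
              (continuous_id.prodMk continuous_const))
        have hcc := ContinuousLinearMap.intervalIntegral_comp_comm
          (((innerSL ℝ).flip z : EuclideanSpace ℝ (Fin n) →L[ℝ] ℝ)) hi
        have h1 : ∀ x : E, (((innerSL ℝ).flip z : EuclideanSpace ℝ (Fin n) →L[ℝ] ℝ)) x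
            = ⟪x, z⟫ := fun x => by
          rw [ContinuousLinearMap.flip_apply, innerSL_apply_apply]
        simp only [h1] at hcc
        exact hcc
      have hv := congrArg (fun x : E => (⟪x, w⟫ : ℝ)) (happ v)
      have hw := congrArg (fun x : E => (⟪x, v⟫ : ℝ)) (happ w)
      simp only [real_inner_smul_left, inner_add_left] at hv hw
      rw [← hinner v w] at hv
      rw [← hinner w v] at hw
      have hsw : (∫ a in R₀..r, ⟪(fderiv ℝ (qgrad n h) (a, q)).comp (inr ℝ ℝ E) v, w⟫)
          = ∫ a in R₀..r, ⟪(fderiv ℝ (qgrad n h) (a, q)).comp (inr ℝ ℝ E) w, v⟫ :=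
        intervalIntegral.integral_congr fun a _ => qgrad_symm hh a q v w
      have := hβsym q v w
      have hfinal : r * ⟪fderiv ℝ α (r, q) (0, v), w⟫
          = r * ⟪fderiv ℝ α (r, q) (0, w), v⟫ := by
        rw [hv, hw, hsw, this]
      exact mul_left_cancel₀ hrpos.ne' hfinal

/-- The image of `Φ(r,q) = (r, h(r,q), q, α(r,q))` over `{r ≥ R₀}` is Lagrangian for the
symplectic form `d(r(p·dq - dz))` if and only if
`α(r,q) = (1/r)(∫_{R₀}^r ∇_q h(a,q) da + β(q))` for some closed one-form `β`. -/
theorem lagrangian_iff_integral_formula (n : ℕ) (R₀ : ℝ) (hR₀ : 0 < R₀)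
    (h : ℝ × EuclideanSpace ℝ (Fin n) → ℝ) (hh : ContDiff ℝ 2 h)
    (α : ℝ × EuclideanSpace ℝ (Fin n) → EuclideanSpace ℝ (Fin n)) (hα : ContDiff ℝ 1 α) :
    (∀ r : ℝ, R₀ ≤ r → ∀ q : EuclideanSpace ℝ (Fin n),
        ∀ ξ η : ℝ × EuclideanSpace ℝ (Fin n),
          coneForm (coneParam h α (r, q))
            (fderiv ℝ (coneParam h α) (r, q) ξ)
            (fderiv ℝ (coneParam h α) (r, q) η) = 0)
      ↔ (∃ β : EuclideanSpace ℝ (Fin n) → EuclideanSpace ℝ (Fin n),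
          ContDiff ℝ 1 β ∧
          (∀ q v w : EuclideanSpace ℝ (Fin n),
            (inner ℝ (fderiv ℝ β q v) w : ℝ) = (inner ℝ (fderiv ℝ β q w) v : ℝ)) ∧
          (∀ r : ℝ, R₀ ≤ r → ∀ q : EuclideanSpace ℝ (Fin n),
            r • α (r, q) =
              (∫ a in R₀..r, gradient (fun q' => h (a, q')) q) + β q)) :=
  lagrangian_iff_integral_formula' R₀ hR₀ h hh α hα
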